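/- If the class G FO_qf(<) of graph classes representable by quantifier-free {<,=}-label decoders collapsed to a fixed level, i.e., if every representable class were representable with k numbers per vertex each at most n^k for one fixed k, then every class in G FO_qf(<) would contain at most 2^{k²·n·⌈log₂ n⌉} labeled graphs on n vertices — which fails since for every constant K, the union of all representable classes contains more than 2^{K n log n} labeled graphs on n vertices for large n. Hence for every k there is k' > k with G^{(k,k)} FO_qf(<) strictly contained in G^{(k',k')} FO_qf(<). -/

import Mathlib

/-- An (unlabeled) graph. -/
def UGraph := (n : ℕ) × SimpleGraph (Fin n)

/-- Quantifier-free formulas over the signature `{<, =}` with variables `x₀, …, x_{m-1}`. -/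
inductive QF : ℕ → Type
  | lt {m : ℕ} (i j : Fin m) : QF m
  | eq {m : ℕ} (i j : Fin m) : QF m
  | not {m : ℕ} (φ : QF m) : QF m
  | and {m : ℕ} (φ ψ : QF m) : QF m
  | or {m : ℕ} (φ ψ : QF m) : QF m

/-- Evaluation of a quantifier-free formula under an assignment of natural numbers. -/
def QF.eval : {m : ℕ} → QF m → (Fin m → ℕ) → Prop
  | _, .lt i j, a => a i < a j
  | _, .eq i j, a => a i = a j
  | _, .not φ, a => ¬ QF.eval φ a
  | _, .and φ ψ, a => QF.eval φ a ∧ QF.eval ψ a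
  | _, .or φ ψ, a => QF.eval φ a ∨ QF.eval ψ a

/-- `G^{(c,k)} FO_qf(<)`: graph classes representable by a quantifier-free
`{<,=}`-formula with `2k` free variables via labelings assigning to each vertex `k`
numbers from `[n^c]`. -/
def GFOqf (c k : ℕ) : Set (Set UGraph) :=
  {C | ∃ φ : QF (k + k), ∀ p ∈ C, ∃ ℓ : Fin p.1 → Fin k → ℕ,
    (∀ (u : Fin p.1) (i : Fin k), 1 ≤ ℓ u i ∧ ℓ u i ≤ p.1 ^ c) ∧
    ∀ u v : Fin p.1, u ≠ v → (p.2.Adj u v ↔ QF.eval φ (Fin.append (ℓ u) (ℓ v)))}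



def QF.rename : {m m' : ℕ} → (Fin m → Fin m') → QF m → QF m'
  | _, _, f, .lt i j => .lt (f i) (f j)
  | _, _, f, .eq i j => .eq (f i) (f j)
  | _, _, f, .not φ => .not (QF.rename f φ)
  | _, _, f, .and φ ψ => .and (QF.rename f φ) (QF.rename f ψ)
  | _, _, f, .or φ ψ => .or (QF.rename f φ) (QF.rename f ψ)

lemma QF.eval_rename {m m' : ℕ} (f : Fin m → Fin m') (φ : QF m) (a : Fin m' → ℕ) :
    (φ.rename f).eval a ↔ φ.eval (a ∘ f) := by
  induction φ <;> simp [QF.rename, QF.eval, *]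

def QF.bigOr {m : ℕ} (fls : QF m) : (d : ℕ) → (Fin d → QF m) → QF m
  | 0, _ => fls
  | d + 1, f => .or (f 0) (QF.bigOr fls d (f ∘ Fin.succ))

lemma QF.eval_bigOr {m : ℕ} (i₀ : Fin m) (d : ℕ) (f : Fin d → QF m) (a : Fin m → ℕ) :
    (QF.bigOr (.and (.eq i₀ i₀) (.not (.eq i₀ i₀))) d f).eval a ↔ ∃ j, (f j).eval a := by
  induction d with
  | zero => simp [QF.bigOr, QF.eval]
  | succ d ih => simp [QF.bigOr, QF.eval, ih, Fin.exists_fin_succ, Function.comp]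

def bipRel (n d : ℕ) (g : Fin n → Fin d → Fin n) :
    (Fin n ⊕ Fin n) → (Fin n ⊕ Fin n) → Prop :=
  fun x y => ∃ i a j, x = Sum.inl i ∧ y = Sum.inr a ∧ g i j = a

def bipGraph (n d : ℕ) (g : Fin n → Fin d → Fin n) : SimpleGraph (Fin (n + n)) :=
  (SimpleGraph.fromRel (bipRel n d g)).comap finSumFinEquiv.symm

lemma bipGraph_adj (n d : ℕ) (g : Fin n → Fin d → Fin n) (u v : Fin (n + n)) :
    (bipGraph n d g).Adj u v ↔ (u ≠ v ∧
      (bipRel n d g (finSumFinEquiv.symm u) (finSumFinEquiv.symm v) ∨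
       bipRel n d g (finSumFinEquiv.symm v) (finSumFinEquiv.symm u))) := by
  simp only [bipGraph, SimpleGraph.comap_adj, SimpleGraph.fromRel_adj]
  constructor
  · rintro ⟨h1, h2⟩
    exact ⟨fun h => h1 (by rw [h]), h2⟩
  · rintro ⟨h1, h2⟩
    exact ⟨fun h => h1 (finSumFinEquiv.symm.injective h), h2⟩

lemma bipGraph_adj_lr (n d : ℕ) (g : Fin n → Fin d → Fin n) (i a : Fin n) :
    (bipGraph n d g).Adj (finSumFinEquiv (Sum.inl i)) (finSumFinEquiv (Sum.inr a)) ↔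
      ∃ j, g i j = a := by
  rw [bipGraph_adj]
  simp only [Equiv.symm_apply_apply, bipRel]
  constructor
  · rintro ⟨-, ⟨i', a', j, hi, ha, hg⟩ | ⟨i', a', j, hi, ha, hg⟩⟩
    · cases hi; cases ha; exact ⟨j, hg⟩
    · cases hi
  · rintro ⟨j, hj⟩
    refine ⟨?_, Or.inl ⟨i, a, j, rfl, rfl, hj⟩⟩
    intro h
    have := finSumFinEquiv.injective h
    simp at this

def sepClass (d : ℕ) : Set UGraph := {p | ∃ n g, p = ⟨n + n, bipGraph n d g⟩}

def sepφ (d : ℕ) : QF ((d + 2) + (d + 2)) :=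
  .or
    (.and (.lt (Fin.castAdd (d+2) ⟨0, by omega⟩) (Fin.castAdd (d+2) ⟨1, by omega⟩))
      (.and (.eq (Fin.natAdd (d+2) ⟨0, by omega⟩) (Fin.natAdd (d+2) ⟨1, by omega⟩))
        (QF.bigOr (.and (.eq (Fin.castAdd (d+2) ⟨0, by omega⟩) (Fin.castAdd (d+2) ⟨0, by omega⟩))
            (.not (.eq (Fin.castAdd (d+2) ⟨0, by omega⟩) (Fin.castAdd (d+2) ⟨0, by omega⟩)))) d
          (fun j => .eq (Fin.castAdd (d+2) ⟨2 + j.val, by omega⟩) (Fin.natAdd (d+2) ⟨0, by omega⟩)))))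
    (.and (.lt (Fin.natAdd (d+2) ⟨0, by omega⟩) (Fin.natAdd (d+2) ⟨1, by omega⟩))
      (.and (.eq (Fin.castAdd (d+2) ⟨0, by omega⟩) (Fin.castAdd (d+2) ⟨1, by omega⟩))
        (QF.bigOr (.and (.eq (Fin.castAdd (d+2) ⟨0, by omega⟩) (Fin.castAdd (d+2) ⟨0, by omega⟩))
            (.not (.eq (Fin.castAdd (d+2) ⟨0, by omega⟩) (Fin.castAdd (d+2) ⟨0, by omega⟩)))) d
          (fun j => .eq (Fin.natAdd (d+2) ⟨2 + j.val, by omega⟩) (Fin.castAdd (d+2) ⟨0, by omega⟩)))))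

def sepL (n d : ℕ) (g : Fin n → Fin d → Fin n) : Fin (n + n) → Fin (d + 2) → ℕ :=
  fun u => Sum.elim
    (fun i t => if _h0 : t.val = 0 then 1 else if _h1 : t.val = 1 then 2
      else n + (g i ⟨t.val - 2, by omega⟩).val + 1)
    (fun a _ => n + a.val + 1)
    (finSumFinEquiv.symm u)

lemma sepL_left {n d : ℕ} (g : Fin n → Fin d → Fin n) {u : Fin (n + n)} {i : Fin n}
    (hu : finSumFinEquiv.symm u = Sum.inl i) :
    (sepL n d g u ⟨0, by omega⟩ = 1) ∧ (sepL n d g u ⟨1, by omega⟩ = 2) ∧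
    ∀ j : Fin d, sepL n d g u ⟨2 + j.val, by omega⟩ = n + (g i j).val + 1 := by
  simp only [sepL, hu, Sum.elim_inl]
  refine ⟨by norm_num, by norm_num, fun j => ?_⟩
  rw [dif_neg (by omega), dif_neg (by omega)]
  have : (⟨(⟨2 + j.val, by omega⟩ : Fin (d+2)).val - 2, by show 2 + j.val - 2 < d; omega⟩ : Fin d) = j :=
    Fin.ext (show 2 + j.val - 2 = j.val by omega)
  rw [this]

lemma sepL_right {n d : ℕ} (g : Fin n → Fin d → Fin n) {u : Fin (n + n)} {a : Fin n}
    (hu : finSumFinEquiv.symm u = Sum.inr a) (t : Fin (d + 2)) :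
    sepL n d g u t = n + a.val + 1 := by
  simp only [sepL, hu, Sum.elim_inr]

lemma eval_sepφ (n d : ℕ) (g : Fin n → Fin d → Fin n) (u v : Fin (n + n)) :
    QF.eval (sepφ d) (Fin.append (sepL n d g u) (sepL n d g v)) ↔
      ((sepL n d g u ⟨0, by omega⟩ < sepL n d g u ⟨1, by omega⟩ ∧
        sepL n d g v ⟨0, by omega⟩ = sepL n d g v ⟨1, by omega⟩ ∧
        ∃ j : Fin d, sepL n d g u ⟨2 + j.val, by omega⟩ = sepL n d g v ⟨0, by omega⟩) ∨
       (sepL n d g v ⟨0, by omega⟩ < sepL n d g v ⟨1, by omega⟩ ∧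
        sepL n d g u ⟨0, by omega⟩ = sepL n d g u ⟨1, by omega⟩ ∧
        ∃ j : Fin d, sepL n d g v ⟨2 + j.val, by omega⟩ = sepL n d g u ⟨0, by omega⟩)) := by
  simp only [sepφ, QF.eval, QF.eval_bigOr, Fin.append_left, Fin.append_right]

lemma sep_mem (d : ℕ) : sepClass d ∈ GFOqf (d + 2) (d + 2) := by
  refine ⟨sepφ d, ?_⟩
  rintro p ⟨n, g, rfl⟩
  refine ⟨sepL n d g, ?_, ?_⟩
  · show ∀ (u : Fin (n + n)) (t : Fin (d + 2)),
        1 ≤ sepL n d g u t ∧ sepL n d g u t ≤ (n + n) ^ (d + 2)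
    intro u t
    have hn : 1 ≤ n := by have := u.isLt; omega
    have hNN : n + n ≤ (n + n) ^ (d + 2) := Nat.le_self_pow (by omega) _
    rcases hsum : finSumFinEquiv.symm u with i | a
    · simp only [sepL, hsum, Sum.elim_inl]
      split_ifs with h0 h1
      · exact ⟨le_refl 1, by omega⟩
      · exact ⟨by omega, by omega⟩
      · have := (g i ⟨t.val - 2, by omega⟩).isLt
        exact ⟨by omega, by omega⟩
    · simp only [sepL, hsum, Sum.elim_inr]
      have := a.isLt
      exact ⟨by omega, by omega⟩
  · intro u v huv
    show (bipGraph n d g).Adj u v ↔ _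
    rcases hu : finSumFinEquiv.symm u with i | a <;>
      rcases hv : finSumFinEquiv.symm v with i' | a'
    · -- left, left : no edge
      obtain ⟨hu0, hu1, _⟩ := sepL_left g hu
      obtain ⟨hv0, hv1, _⟩ := sepL_left g hv
      rw [eval_sepφ, bipGraph_adj]
      simp only [hu, hv, bipRel, hu0, hu1, hv0, hv1]
      simp
    · -- left, right : edge iff some coordinate matches
      obtain ⟨hu0, hu1, huj⟩ := sepL_left g hu
      have hv0 := sepL_right g hv
      have hu' : u = finSumFinEquiv (Sum.inl i) := (Equiv.symm_apply_eq _).1 hu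
      have hv' : v = finSumFinEquiv (Sum.inr a') := (Equiv.symm_apply_eq _).1 hv
      have hAdj : (bipGraph n d g).Adj u v ↔ ∃ j, g i j = a' := by
        rw [hu', hv']; exact bipGraph_adj_lr n d g i a'
      rw [hAdj, eval_sepφ]
      simp only [hu0, hu1, hv0, huj]
      constructor
      · rintro ⟨j, hj⟩
        exact Or.inl ⟨by omega, trivial, j, by omega⟩
      · rintro (⟨-, -, j, hj⟩ | ⟨hlt, -⟩)
        · exact ⟨j, Fin.ext (by omega)⟩
        · omega
    · -- right, left
      have hu0 := sepL_right g hu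
      obtain ⟨hv0, hv1, hvj⟩ := sepL_left g hv
      have hu' : u = finSumFinEquiv (Sum.inr a) := (Equiv.symm_apply_eq _).1 hu
      have hv' : v = finSumFinEquiv (Sum.inl i') := (Equiv.symm_apply_eq _).1 hv
      have hAdj : (bipGraph n d g).Adj u v ↔ ∃ j, g i' j = a := by
        rw [hu', hv', SimpleGraph.adj_comm]; exact bipGraph_adj_lr n d g i' a
      rw [hAdj, eval_sepφ]
      simp only [hu0, hv0, hv1, hvj]
      constructor
      · rintro ⟨j, hj⟩
        exact Or.inr ⟨by omega, trivial, j, by omega⟩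
      · rintro (⟨hlt, -⟩ | ⟨-, -, j, hj⟩)
        · omega
        · exact ⟨j, Fin.ext (by omega)⟩
    · -- right, right : no edge
      have hu0 := sepL_right g hu
      have hv0 := sepL_right g hv
      rw [eval_sepφ, bipGraph_adj]
      simp only [hu, hv, bipRel, hu0, hv0]
      simp

lemma blocks {m b c j j' : ℕ} (hb : b < m) (hc : c < m) (h : j * m + b = j' * m + c) :
    j = j' ∧ b = c := by
  have hj : j = j' := by
    rcases Nat.lt_trichotomy j j' with hlt | heq | hgt
    · have : j + 1 ≤ j' := hlt
      nlinarith
    · exact heq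
    · have : j' + 1 ≤ j := hgt
      nlinarith
  exact ⟨hj, by subst hj; omega⟩

lemma count_contra {k d m n : ℕ} (hd : d = 2 * k ^ 2 + 1)
    (hm : m = (2 * d) ^ (2 * k ^ 2) + 1) (hn : n = d * m) :
    (((n + n) ^ k) ^ k) ^ (n + n) < (m ^ d) ^ n := by
  have hn0 : n ≠ 0 := by
    have : 0 < d * m := Nat.mul_pos (by omega) (by omega)
    omega
  have hkey : (n + n) ^ (2 * k ^ 2) < m ^ d := by
    have h2 : n + n = (2 * d) * m := by rw [hn]; ring
    have h3 : (2 * d) ^ (2 * k ^ 2) < m := by omega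
    calc (n + n) ^ (2 * k ^ 2) = ((2 * d) * m) ^ (2 * k ^ 2) := by rw [h2]
      _ = (2 * d) ^ (2 * k ^ 2) * m ^ (2 * k ^ 2) := by rw [mul_pow]
      _ < m * m ^ (2 * k ^ 2) :=
          mul_lt_mul_of_pos_right h3 (Nat.pow_pos (by omega))
      _ = m ^ (2 * k ^ 2 + 1) := by rw [pow_succ m (2 * k ^ 2), mul_comm]
      _ = m ^ d := by rw [hd]
  calc (((n + n) ^ k) ^ k) ^ (n + n)
      = (n + n) ^ (k * k * (n + n)) := by rw [← pow_mul, ← pow_mul]; congr 1; ring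
    _ = ((n + n) ^ (2 * k ^ 2)) ^ n := by rw [← pow_mul]; congr 1; ring
    _ < (m ^ d) ^ n := Nat.pow_lt_pow_left hkey hn0

lemma sep_not_mem (k : ℕ) : sepClass (2 * k ^ 2 + 1) ∉ GFOqf k k := by
  rintro ⟨φ, hφ⟩
  set d := 2 * k ^ 2 + 1 with hd
  set m := (2 * d) ^ (2 * k ^ 2) + 1 with hm
  set n := d * m with hn
  have hgval : ∀ (h : Fin n → Fin d → Fin m) (i : Fin n) (j : Fin d),
      j.val * m + (h i j).val < n := by
    intro h i j
    have h1 := (h i j).isLt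
    have h2 : j.val + 1 ≤ d := j.isLt
    calc j.val * m + (h i j).val < (j.val + 1) * m := by nlinarith
      _ ≤ d * m := Nat.mul_le_mul_right m h2
  let gf : (Fin n → Fin d → Fin m) → Fin n → Fin d → Fin n := fun h i j =>
    ⟨j.val * m + (h i j).val, hgval h i j⟩
  have hmem : ∀ h, (⟨n + n, bipGraph n d (gf h)⟩ : UGraph) ∈ sepClass d :=
    fun h => ⟨n, gf h, rfl⟩
  choose ℓ hbd hadj using fun h => hφ ⟨n + n, bipGraph n d (gf h)⟩ (hmem h)
  have hF : ∀ h (u : Fin (n + n)) (t : Fin k), ℓ h u t - 1 < (n + n) ^ k := by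
    intro h u t
    have h1 : 1 ≤ ℓ h u t := (hbd h u t).1
    have h2 : ℓ h u t ≤ (n + n) ^ k := (hbd h u t).2
    omega
  let F : (Fin n → Fin d → Fin m) → (Fin (n + n) → Fin k → Fin ((n + n) ^ k)) :=
    fun h u t => ⟨ℓ h u t - 1, hF h u t⟩
  have hinj : Function.Injective F := by
    intro h1 h2 hFeq
    have hℓ : ∀ u t, ℓ h1 u t = ℓ h2 u t := by
      intro u t
      have := congrFun (congrFun hFeq u) t
      have hv : ℓ h1 u t - 1 = ℓ h2 u t - 1 := congrArg Fin.val this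
      have e1 := (hbd h1 u t).1
      have e2 := (hbd h2 u t).1
      omega
    have hAdjEq : ∀ u v : Fin (n + n), u ≠ v →
        ((bipGraph n d (gf h1)).Adj u v ↔ (bipGraph n d (gf h2)).Adj u v) := by
      intro u v huv
      rw [show (bipGraph n d (gf h1)).Adj u v ↔ _ from hadj h1 u v huv,
          show (bipGraph n d (gf h2)).Adj u v ↔ _ from hadj h2 u v huv]
      have : Fin.append (ℓ h1 u) (ℓ h1 v) = Fin.append (ℓ h2 u) (ℓ h2 v) := by
        rw [show ℓ h1 u = ℓ h2 u from funext (hℓ u),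
            show ℓ h1 v = ℓ h2 v from funext (hℓ v)]
      rw [this]
    funext i j
    have hne : finSumFinEquiv (Sum.inl i) ≠ finSumFinEquiv (Sum.inr (gf h1 i j)) := by
      intro h
      have := finSumFinEquiv.injective h
      simp at this
    have hadj1 : (bipGraph n d (gf h1)).Adj (finSumFinEquiv (Sum.inl i))
        (finSumFinEquiv (Sum.inr (gf h1 i j))) :=
      (bipGraph_adj_lr n d (gf h1) i (gf h1 i j)).2 ⟨j, rfl⟩
    have hadj2 := (hAdjEq _ _ hne).1 hadj1
    obtain ⟨j', hj'⟩ := (bipGraph_adj_lr n d (gf h2) i (gf h1 i j)).1 hadj2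
    have hv : j'.val * m + (h2 i j').val = j.val * m + (h1 i j).val := congrArg Fin.val hj'
    obtain ⟨hjj, hbb⟩ := blocks (h2 i j').isLt (h1 i j).isLt hv
    have : j' = j := Fin.ext hjj
    subst this
    exact (Fin.ext hbb).symm
  have hcard := Fintype.card_le_of_injective F hinj
  simp only [Fintype.card_fun, Fintype.card_fin] at hcard
  have := count_contra hd hm hn
  omega

lemma GFOqf_mono {c k c' k' : ℕ} (hc : c ≤ c') (hk : k ≤ k') :
    GFOqf c k ⊆ GFOqf c' k' := by
  rintro C ⟨φ, hφ⟩
  refine ⟨φ.rename (Fin.addCases (fun s => Fin.castAdd k' (Fin.castLE hk s))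
    (fun s => Fin.natAdd k' (Fin.castLE hk s))), ?_⟩
  intro p hp
  obtain ⟨ℓ, hb, had⟩ := hφ p hp
  refine ⟨fun u t => if h : t.val < k then ℓ u ⟨t.val, h⟩ else 1, ?_, ?_⟩
  · intro u t
    have hn : 1 ≤ p.1 := by
      have : u.val < p.1 := u.isLt
      omega
    dsimp only
    split_ifs with h
    · obtain ⟨h1, h2⟩ := hb u ⟨t.val, h⟩
      exact ⟨h1, h2.trans (Nat.pow_le_pow_right hn hc)⟩
    · exact ⟨le_refl 1, Nat.one_le_pow _ _ (by omega)⟩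
  · intro u v huv
    rw [had u v huv, QF.eval_rename]
    have heq : (Fin.append (fun t => if h : t.val < k then ℓ u ⟨t.val, h⟩ else 1)
          (fun t => if h : t.val < k then ℓ v ⟨t.val, h⟩ else 1)) ∘
        (Fin.addCases (fun s => Fin.castAdd k' (Fin.castLE hk s))
          (fun s => Fin.natAdd k' (Fin.castLE hk s))) = Fin.append (ℓ u) (ℓ v) := by
      funext s
      refine Fin.addCases (fun s₀ => ?_) (fun s₀ => ?_) s
      · simp only [Function.comp_apply, Fin.addCases_left, Fin.append_left,
          Fin.coe_castLE, Fin.is_lt, dif_pos]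
      · simp only [Function.comp_apply, Fin.addCases_right, Fin.append_right,
          Fin.coe_castLE, Fin.is_lt, dif_pos]
    rw [heq]

/-- The hierarchy of quantifier-free `FO(<)` labeling schemes does not collapse: for
every `k` there is `k' > k` such that `G^{(k,k)} FO_qf(<)` is strictly contained in
`G^{(k',k')} FO_qf(<)`. -/
theorem stmt_19 :
    ∀ k : ℕ, ∃ k' : ℕ, k < k' ∧ GFOqf k k ⊆ GFOqf k' k' ∧ GFOqf k k ≠ GFOqf k' k' := by
  intro k
  have hk : k < 2 * k ^ 2 + 3 := by nlinarith
  refine ⟨2 * k ^ 2 + 3, hk, GFOqf_mono (le_of_lt hk) (le_of_lt hk), ?_⟩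
  intro heq
  have h1 := sep_mem (2 * k ^ 2 + 1)
  rw [show 2 * k ^ 2 + 1 + 2 = 2 * k ^ 2 + 3 from by omega] at h1
  rw [← heq] at h1
  exact sep_not_mem k h1
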